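/- Principle C*⁻(ω₁) is false and principle D⁻(ω₁) is false. -/

import Mathlib

open Cardinal

/-- `C` is closed and unbounded (club) in the ordinal `o`. -/
def ClubIn (o : Ordinal) (C : Set Ordinal) : Prop :=
  C ⊆ Set.Iio o ∧ (∀ α < o, ∃ β ∈ C, α < β) ∧
    ∀ α < o, 0 < α → (∀ β < α, ∃ γ ∈ C, β < γ ∧ γ < α) → α ∈ C

/-- `S` is a stationary subset of the ordinal `o`: it meets every club subset of `o`. -/
def StationaryIn (o : Ordinal) (S : Set Ordinal) : Prop :=
  S ⊆ Set.Iio o ∧ ∀ C, ClubIn o C → (S ∩ C).Nonempty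

/-- `S` is a cofinal (unbounded) subset of the ordinal `o`. -/
def CofinalIn (o : Ordinal) (S : Set Ordinal) : Prop :=
  S ⊆ Set.Iio o ∧ ∀ α < o, ∃ β ∈ S, α < β

/-- For a matrix `A` of subsets of `ℕ`, a finite sequence `t ∈ ω^{<ω}` and
`s : {0,…,|t|-1} → Ordinal`, this is `A[s,t] = ⋂_{i<|t|} A(s i, t i)`. -/
def MatInt (A : Ordinal → ℕ → Set ℕ) (t : List ℕ) (s : Fin t.length → Ordinal) : Set ℕ :=
  ⋂ i, A (s i) (t.get i)
/-- Principle C*⁻(κ). -/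
def PrincipleCstarMinus (κ : Cardinal) : Prop :=
  ∀ (T : Set (List ℕ)) (A : Ordinal → ℕ → Set ℕ),
    (∃ S : Set Ordinal, CofinalIn κ.ord S ∧
      ∀ t ∈ T, ∀ s : Fin t.length → Ordinal, Function.Injective s →
        (∀ i, s i ∈ S) → (MatInt A t s).Finite) ∨
    (∃ t ∈ T, ∃ D : Fin t.length → Set Ordinal,
      (∀ i, CofinalIn κ.ord (D i)) ∧
      ∀ s : Fin t.length → Ordinal, Function.Injective s →
        (∀ i, s i ∈ D i) → (MatInt A t s).Infinite)


/-- A family of subsets of `ℕ` is centered if every finite subfamily has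
nonempty intersection. -/
def Centered (L : Set (Set ℕ)) : Prop :=
  ∀ F : Finset (Set ℕ), ↑F ⊆ L → (⋂₀ (F : Set (Set ℕ))).Nonempty

/-- The restriction of the matrix `A` to `S` is ω-adic. -/
def OmegaAdicOn (A : Ordinal → ℕ → Set ℕ) (S : Set Ordinal) : Prop :=
  ∀ (t : List ℕ) (s : Fin t.length → Ordinal), Function.Injective s →
    (∀ i, s i ∈ S) → (MatInt A t s).Nonempty
/-- `L(A)`: the sets `Y ⊆ ℕ` such that `{α < κ : ∃ n, A(α,n) ⊆ Y}` has cardinality `κ`. -/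
def Lcard (κ : Cardinal.{0}) (A : Ordinal.{0} → ℕ → Set ℕ) : Set (Set ℕ) :=
  {Y : Set ℕ | #{α : Ordinal | α < κ.ord ∧ ∃ n : ℕ, A α n ⊆ Y} = Cardinal.lift.{1,0} κ}

/-- Principle D⁻(κ). -/
def PrincipleDminus (κ : Cardinal.{0}) : Prop :=
  ∀ A : Ordinal.{0} → ℕ → Set ℕ, Centered (Lcard κ A) →
    ∃ S : Set Ordinal, CofinalIn κ.ord S ∧ OmegaAdicOn A S

/-! ## Auxiliary development: an ω₁-tower of subsets of ℕ

We construct, by transfinite recursion, a family `tw α` (for `α < ω₁`) of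
infinite, co-infinite subsets of `ℕ` which is strictly `⊆*`-increasing:
for `β < α < ω₁`, `tw β \ tw α` is finite and `tw α \ tw β` is infinite.
Such a tower refutes both principles. -/

noncomputable section Stmt8Aux

namespace Stmt8

open Set

abbrev ω1 : Ordinal.{0} := (Cardinal.aleph 1).ord

lemma omega1_pos : (0 : Ordinal) < ω1 := by
  rw [Cardinal.lt_ord, Ordinal.card_zero]
  exact lt_of_lt_of_le Cardinal.aleph0_pos (Cardinal.aleph0_le_aleph 1)

lemma omega1_isLimit : Order.IsSuccLimit ω1 :=
  Cardinal.isSuccLimit_ord (Cardinal.aleph0_le_aleph 1)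

lemma succ_lt_omega1 {γ : Ordinal} (h : γ < ω1) : γ + 1 < ω1 := by
  rw [Ordinal.add_one_eq_succ]
  exact omega1_isLimit.succ_lt h

lemma lt_succ_self (γ : Ordinal) : γ < γ + 1 := by
  rw [Ordinal.add_one_eq_succ]
  exact Order.lt_succ γ

lemma card_le_aleph0 {α : Ordinal.{0}} (h : α < ω1) : α.card ≤ ℵ₀ := by
  have := Cardinal.lt_ord.mp h
  rwa [← Cardinal.succ_aleph0, Order.lt_succ_iff] at this

lemma countable_Iio {α : Ordinal.{0}} (h : α < ω1) : Countable (Set.Iio α) := by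
  rw [← Cardinal.mk_le_aleph0_iff, Ordinal.mk_Iio_ordinal]
  simpa using Cardinal.lift_le.mpr (card_le_aleph0 h)

/-- The key diagonalization lemma: any countable `⊆*`-chain of sets with
infinite complements has a proper pseudo-upper bound. -/
lemma exists_pseudo_bound (C : ℕ → Set ℕ)
    (hcc : ∀ n, (C n)ᶜ.Infinite)
    (hchain : ∀ n m, (C n \ C m).Finite ∨ (C m \ C n).Finite) :
    ∃ B : Set ℕ, B.Infinite ∧ Bᶜ.Infinite ∧
      ∀ n, (C n \ B).Finite ∧ (B \ C n).Infinite := by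
  classical
  set U : ℕ → Set ℕ := fun n => ⋃ i ∈ Finset.range (n + 1), C i with hU
  have hCU : ∀ i n, i ≤ n → C i ⊆ U n := by
    intro i n hin x hx
    exact Set.mem_biUnion (Finset.mem_range.mpr (Nat.lt_succ_of_le hin)) hx
  have hmax : ∀ n, ∃ j, ∀ i, i ≤ n → (C i \ C j).Finite := by
    intro n
    induction n with
    | zero =>
      refine ⟨0, fun i hi => ?_⟩
      interval_cases i
      simp
    | succ n ih =>
      obtain ⟨j, hj⟩ := ih
      rcases hchain (n + 1) j with h | h
      · refine ⟨j, fun i hi => ?_⟩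
        rcases Nat.lt_succ_iff_lt_or_eq.mp (Nat.lt_succ_of_le hi) with h' | rfl
        · exact hj i (Nat.lt_succ_iff.mp h')
        · exact h
      · refine ⟨n + 1, fun i hi => ?_⟩
        rcases Nat.lt_succ_iff_lt_or_eq.mp (Nat.lt_succ_of_le hi) with h' | rfl
        · have : C i \ C (n + 1) ⊆ (C i \ C j) ∪ (C j \ C (n + 1)) := by
            intro x hx
            by_cases hxj : x ∈ C j
            · exact Or.inr ⟨hxj, hx.2⟩
            · exact Or.inl ⟨hx.1, hxj⟩
          exact ((hj i (Nat.lt_succ_iff.mp h')).union h).subset this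
        · simp
  have hUco : ∀ n, (U n)ᶜ.Infinite := by
    intro n
    obtain ⟨j, hj⟩ := hmax n
    have h1 : (U n \ C j).Finite := by
      have hsub : U n \ C j ⊆ ⋃ i ∈ Finset.range (n + 1), (C i \ C j) := by
        rintro x ⟨hx, hxj⟩
        obtain ⟨i, hi, hxi⟩ := Set.mem_iUnion₂.mp hx
        exact Set.mem_biUnion hi ⟨hxi, hxj⟩
      exact (Set.Finite.biUnion (Finset.range (n + 1)).finite_toSet
        (fun i hi => hj i (Nat.lt_succ_iff.mp (Finset.mem_range.mp hi)))).subset hsub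
    have h2 : (C j)ᶜ \ (U n \ C j) ⊆ (U n)ᶜ := by
      rintro x ⟨hx1, hx2⟩ hxU
      exact hx2 ⟨hxU, hx1⟩
    exact ((hcc j).diff h1).mono h2
  -- diagonal sequence escaping every `U n`
  have pick : ∀ (n : ℕ) (a : ℕ), ∃ b, b ∈ (U n)ᶜ ∧ a < b := by
    intro n a
    obtain ⟨b, hb, hab⟩ := (hUco n).exists_gt a
    exact ⟨b, hb, hab⟩
  choose f hf1 hf2 using pick
  let z : ℕ → ℕ := fun n => Nat.rec (f 0 0) (fun n ih => f (n + 1) ih) n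
  have hzm : StrictMono z := strictMono_nat_of_lt_succ (fun n => hf2 (n + 1) (z n))
  have hzU : ∀ n, z n ∈ (U n)ᶜ := by
    intro n
    cases n with
    | zero => exact hf1 0 0
    | succ n => exact hf1 (n + 1) (z n)
  set Z : Set ℕ := Set.range z with hZ
  have hZinf : Z.Infinite := Set.infinite_range_of_injective hzm.injective
  have hCZ : ∀ m, (C m ∩ Z).Finite := by
    intro m
    have hsub : C m ∩ Z ⊆ z '' Set.Iio m := by
      rintro x ⟨hxC, n, rfl⟩
      by_cases h : n < m
      · exact ⟨n, h, rfl⟩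
      · exact absurd (hCU m n (le_of_not_gt h) hxC) (hzU n)
    exact ((Set.finite_Iio m).image z).subset hsub
  set B0 : Set ℕ := (⋃ n, C n) \ Z with hB0
  have hCB0 : ∀ m, (C m \ B0).Finite := by
    intro m
    refine (hCZ m).subset ?_
    rintro x ⟨hxC, hx⟩
    by_cases hxZ : x ∈ Z
    · exact ⟨hxC, hxZ⟩
    · exact absurd ⟨Set.mem_iUnion.mpr ⟨m, hxC⟩, hxZ⟩ hx
  have hZB0c : Z ⊆ B0ᶜ := fun x hx hB => hB.2 hx
  have hB0cInf : B0ᶜ.Infinite := hZinf.mono hZB0c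
  let e := hB0cInf.natEmbedding
  let w2 : ℕ → ℕ := fun k => (e (2 * k) : ℕ)
  let w1 : ℕ → ℕ := fun k => (e (2 * k + 1) : ℕ)
  have hw2inj : Function.Injective w2 := by
    intro a b h
    have := e.injective (Subtype.ext h)
    omega
  have hw1inj : Function.Injective w1 := by
    intro a b h
    have := e.injective (Subtype.ext h)
    omega
  set W : Set ℕ := Set.range w2 with hW
  have hWinf : W.Infinite := Set.infinite_range_of_injective hw2inj
  have hWB0c : W ⊆ B0ᶜ := by
    rintro x ⟨k, rfl⟩
    exact (e (2 * k)).2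
  refine ⟨B0 ∪ W, hWinf.mono Set.subset_union_right, ?_, ?_⟩
  · have hsub : Set.range w1 ⊆ (B0 ∪ W)ᶜ := by
      rintro x ⟨k, rfl⟩ hx
      rcases hx with h | h
      · exact (e (2 * k + 1)).2 h
      · rcases h with ⟨j, hj⟩
        have := e.injective (Subtype.ext hj)
        omega
    exact (Set.infinite_range_of_injective hw1inj).mono hsub
  · intro n
    constructor
    · refine (hCB0 n).subset ?_
      rintro x ⟨hx1, hx2⟩
      exact ⟨hx1, fun h => hx2 (Or.inl h)⟩
    · have hWCn : (W ∩ C n).Finite := by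
        refine (hCB0 n).subset ?_
        rintro x ⟨hxW, hxC⟩
        exact ⟨hxC, hWB0c hxW⟩
      have hinf : (W \ (W ∩ C n)).Infinite := hWinf.diff hWCn
      refine hinf.mono ?_
      rintro x ⟨hxW, hx⟩
      exact ⟨Or.inr hxW, fun hxC => hx ⟨hxW, hxC⟩⟩

open Classical in
/-- The recursion functional for the tower. -/
def twF : ∀ α : Ordinal.{0}, (∀ β, β < α → Set ℕ) → Set ℕ := fun α ih =>
  if h : ∃ B : Set ℕ, B.Infinite ∧ Bᶜ.Infinite ∧
      ∀ β (hβ : β < α), (ih β hβ \ B).Finite ∧ (B \ ih β hβ).Infinite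
  then h.choose else ∅

/-- The tower. -/
def tw : Ordinal.{0} → Set ℕ := WellFounded.fix Ordinal.lt_wf twF

lemma tw_eq (α : Ordinal.{0}) : tw α = twF α (fun β _ => tw β) :=
  WellFounded.fix_eq _ _ _

/-- Invariant of the construction (which we verify below `ω₁`). -/
def Inv (α : Ordinal.{0}) : Prop :=
  (tw α).Infinite ∧ (tw α)ᶜ.Infinite ∧
    ∀ β, β < α → (tw β \ tw α).Finite ∧ (tw α \ tw β).Infinite

lemma inv_all : ∀ α : Ordinal.{0}, α < ω1 → Inv α := by
  intro α
  induction α using Ordinal.induction with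
  | h α IH =>
    intro hα
    have hex : ∃ B : Set ℕ, B.Infinite ∧ Bᶜ.Infinite ∧
        ∀ β (hβ : β < α), (tw β \ B).Finite ∧ (B \ tw β).Infinite := by
      rcases isEmpty_or_nonempty (Set.Iio α) with he | hne
      · obtain ⟨B, hB1, hB2, _⟩ := exists_pseudo_bound (fun _ => (∅ : Set ℕ))
          (by intro n; simpa using Set.infinite_univ) (by intro n m; left; simp)
        exact ⟨B, hB1, hB2, fun β hβ => (he.false ⟨β, hβ⟩).elim⟩
      · have hcnt : Countable (Set.Iio α) := countable_Iio hα
        obtain ⟨f, hf⟩ := countable_iff_exists_surjective.mp hcnt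
        set C : ℕ → Set ℕ := fun n => tw ((f n : Ordinal)) with hC
        have hIHf : ∀ n : ℕ, Inv ((f n : Ordinal)) :=
          fun n => IH _ (f n).2 ((f n).2.trans hα)
        have hchain : ∀ n m, (C n \ C m).Finite ∨ (C m \ C n).Finite := by
          intro n m
          rcases lt_trichotomy ((f n : Ordinal)) ((f m : Ordinal)) with h | h | h
          · left; exact ((hIHf m).2.2 _ h).1
          · left
            have hnm : C n = C m := by
              show tw ((f n : Ordinal)) = tw ((f m : Ordinal))
              rw [h]
            rw [hnm]
            simp
          · right; exact ((hIHf n).2.2 _ h).1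
        obtain ⟨B, hB1, hB2, hB3⟩ := exists_pseudo_bound C (fun n => (hIHf n).2.1) hchain
        refine ⟨B, hB1, hB2, ?_⟩
        intro β hβ
        obtain ⟨n, hn⟩ := hf ⟨β, hβ⟩
        have hCn : C n = tw β := by
          show tw ((f n : Ordinal)) = tw β
          rw [hn]
        rw [← hCn]
        exact hB3 n
    have htw : tw α = hex.choose := by
      rw [tw_eq]
      exact dif_pos hex
    have hs := hex.choose_spec
    rw [← htw] at hs
    exact ⟨hs.1, hs.2.1, fun β hβ => hs.2.2 β hβ⟩

lemma tw_fin {β γ : Ordinal.{0}} (h : β < γ) (hγ : γ < ω1) : (tw β \ tw γ).Finite :=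
  ((inv_all γ hγ).2.2 β h).1

lemma tw_fin' {β γ : Ordinal.{0}} (h : β ≤ γ) (hγ : γ < ω1) : (tw β \ tw γ).Finite := by
  rcases eq_or_lt_of_le h with rfl | h'
  · simp
  · exact tw_fin h' hγ

lemma tw_inf {β γ : Ordinal.{0}} (h : β < γ) (hγ : γ < ω1) : (tw γ \ tw β).Infinite :=
  ((inv_all γ hγ).2.2 β h).2

/-- The matrix refuting C*⁻(ω₁). -/
def A1 : Ordinal.{0} → ℕ → Set ℕ := fun α n => if n = 0 then tw α else (tw α)ᶜ

/-- The matrix refuting D⁻(ω₁). -/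
def A2 : Ordinal.{0} → ℕ → Set ℕ := fun α n =>
  if n = 0 then (tw α)ᶜ else tw α \ {m : ℕ | m < n}

lemma fin2cases {n m : ℕ} (i : Fin ([n, m] : List ℕ).length) :
    i = ⟨0, by simp⟩ ∨ i = ⟨1, by simp⟩ := by
  rcases i with ⟨k, hk⟩
  have hk2 : k < 2 := by simpa using hk
  interval_cases k
  · exact Or.inl rfl
  · exact Or.inr rfl

lemma matInt_pair (A : Ordinal.{0} → ℕ → Set ℕ) (n m : ℕ)
    (s : Fin (([n, m] : List ℕ).length) → Ordinal.{0}) :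
    MatInt A [n, m] s = A (s ⟨0, by simp⟩) n ∩ A (s ⟨1, by simp⟩) m := by
  ext x
  simp only [MatInt, Set.mem_iInter, Set.mem_inter_iff]
  constructor
  · intro h
    exact ⟨h ⟨0, by simp⟩, h ⟨1, by simp⟩⟩
  · rintro ⟨h0, h1⟩ i
    rcases fin2cases i with rfl | rfl
    · exact h0
    · exact h1

/-- The pair selector. -/
def spair (a b : Ordinal.{0}) (n m : ℕ) : Fin (([n, m] : List ℕ).length) → Ordinal.{0} :=
  fun i => if (i : ℕ) = 0 then a else b

lemma spair_zero (a b : Ordinal.{0}) (n m : ℕ) : spair a b n m ⟨0, by simp⟩ = a := rfl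

lemma spair_one (a b : Ordinal.{0}) (n m : ℕ) : spair a b n m ⟨1, by simp⟩ = b := rfl

lemma spair_inj {a b : Ordinal.{0}} (h : a ≠ b) (n m : ℕ) :
    Function.Injective (spair a b n m) := by
  intro i j hij
  have hi2 : (i : ℕ) < 2 := lt_of_lt_of_le i.2 (by simp)
  have hj2 : (j : ℕ) < 2 := lt_of_lt_of_le j.2 (by simp)
  by_cases hi : (i : ℕ) = 0 <;> by_cases hj : (j : ℕ) = 0
  · exact Fin.ext (by omega)
  · simp only [spair, hi, hj, if_true, if_false, if_pos, if_neg, not_false_iff] at hij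
    exact absurd hij h
  · simp only [spair, hi, hj, if_true, if_false, if_pos, if_neg, not_false_iff] at hij
    exact absurd hij.symm h
  · exact Fin.ext (by omega)

lemma cof_two {S : Set Ordinal.{0}} (hS : CofinalIn ω1 S) :
    ∃ a ∈ S, ∃ b ∈ S, a < b := by
  obtain ⟨a, ha, _⟩ := hS.2 0 omega1_pos
  obtain ⟨b, hb, hab⟩ := hS.2 a (hS.1 ha)
  exact ⟨a, ha, b, hb, hab⟩

theorem notC : ¬ PrincipleCstarMinus (Cardinal.aleph 1 : Cardinal.{0}) := by
  intro H
  rcases H {[0, 1]} A1 with ⟨S, hS, hfin⟩ | ⟨t, ht, D, hD, hinf⟩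
  · obtain ⟨a, ha, b, hb, hab⟩ := cof_two hS
    have hmem : ∀ i, spair b a 0 1 i ∈ S := by
      intro i
      rcases fin2cases i with rfl | rfl
      · exact hb
      · exact ha
    have h := hfin [0, 1] rfl (spair b a 0 1) (spair_inj (ne_of_gt hab) 0 1) hmem
    rw [matInt_pair, spair_zero, spair_one] at h
    have heq : A1 b 0 ∩ A1 a 1 = tw b \ tw a := by
      simp [A1, Set.diff_eq]
    rw [heq] at h
    exact tw_inf hab (hS.1 hb) h
  · rw [Set.mem_singleton_iff] at ht
    subst ht
    obtain ⟨a, ha, _⟩ := (hD ⟨0, by simp⟩).2 0 omega1_pos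
    obtain ⟨b, hb, hab⟩ := (hD ⟨1, by simp⟩).2 a ((hD ⟨0, by simp⟩).1 ha)
    have hmem : ∀ i, spair a b 0 1 i ∈ D i := by
      intro i
      rcases fin2cases i with rfl | rfl
      · exact ha
      · exact hb
    have h := hinf (spair a b 0 1) (spair_inj (ne_of_lt hab) 0 1) hmem
    rw [matInt_pair, spair_zero, spair_one] at h
    have heq : A1 a 0 ∩ A1 b 1 = tw a \ tw b := by
      simp [A1, Set.diff_eq]
    rw [heq] at h
    exact h (tw_fin hab ((hD ⟨1, by simp⟩).1 hb))

lemma key_per_Y {Y : Set ℕ} (hY : Y ∈ Lcard (Cardinal.aleph 1) A2) :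
    ∃ γ, γ < ω1 ∧ ∀ δ, γ ≤ δ → δ < ω1 → ((tw (δ + 1) \ tw δ) ∩ Yᶜ).Finite := by
  classical
  by_cases hc : ∃ a, a < ω1 ∧ Yᶜ ⊆ tw a
  · obtain ⟨a, ha, hsub⟩ := hc
    refine ⟨a, ha, fun δ hged hδ => ?_⟩
    refine (tw_fin' hged hδ).subset ?_
    rintro x ⟨⟨_, hx2⟩, hx3⟩
    exact ⟨hsub hx3, hx2⟩
  · push_neg at hc
    refine ⟨0, omega1_pos, fun δ _ hδ => ?_⟩
    have hYc : #{α : Ordinal.{0} | α < (Cardinal.aleph 1).ord ∧ ∃ n : ℕ, A2 α n ⊆ Y}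
        = Cardinal.lift.{1, 0} (Cardinal.aleph 1) := hY
    have hub : ∃ α, (α < ω1 ∧ ∃ n : ℕ, A2 α n ⊆ Y) ∧ δ + 1 < α := by
      by_contra hcon
      push_neg at hcon
      have hsubM : {α : Ordinal.{0} | α < (Cardinal.aleph 1).ord ∧ ∃ n : ℕ, A2 α n ⊆ Y}
          ⊆ Set.Iio (δ + 1 + 1) := by
        intro α hα
        have h1 : α ≤ δ + 1 := hcon α hα
        exact lt_of_le_of_lt h1 (lt_succ_self _)
      have hle := Cardinal.mk_le_mk_of_subset hsubM
      rw [hYc, Ordinal.mk_Iio_ordinal] at hle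
      have hcard : (δ + 1 + 1).card ≤ ℵ₀ :=
        card_le_aleph0 (succ_lt_omega1 (succ_lt_omega1 hδ))
      have h2 : Cardinal.lift.{1, 0} (Cardinal.aleph 1) ≤ Cardinal.lift.{1, 0} ℵ₀ :=
        hle.trans (Cardinal.lift_le.mpr hcard)
      rw [Cardinal.lift_le] at h2
      exact absurd h2 (not_le.mpr Cardinal.aleph0_lt_aleph_one)
    obtain ⟨α, ⟨hα1, n, hn⟩, hgt⟩ := hub
    have hfin2 : (tw α ∩ Yᶜ).Finite := by
      rcases Nat.eq_zero_or_pos n with rfl | hpos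
      · exfalso
        apply hc α hα1
        intro x hx
        by_contra hxt
        have : x ∈ A2 α 0 := by simp [A2, hxt]
        exact hx (hn this)
      · have hne : n ≠ 0 := Nat.pos_iff_ne_zero.mp hpos
        have hA : A2 α n = tw α \ {m : ℕ | m < n} := by simp [A2, hne]
        have hsub : tw α ∩ Yᶜ ⊆ {m : ℕ | m < n} := by
          rintro x ⟨hx1, hx2⟩
          by_contra hxn
          exact hx2 (hn (by rw [hA]; exact ⟨hx1, hxn⟩))
        exact (Set.finite_Iio n).subset hsub
    have hfin3 : (tw (δ + 1) ∩ Yᶜ).Finite := by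
      have hsub : tw (δ + 1) ∩ Yᶜ ⊆ (tw (δ + 1) \ tw α) ∪ (tw α ∩ Yᶜ) := by
        rintro x ⟨hx1, hx2⟩
        by_cases hxα : x ∈ tw α
        · exact Or.inr ⟨hxα, hx2⟩
        · exact Or.inl ⟨hx1, hxα⟩
      exact ((tw_fin hgt hα1).union hfin2).subset hsub
    exact hfin3.subset (fun x hx => ⟨hx.1.1, hx.2⟩)

lemma centeredA2 : Centered (Lcard (Cardinal.aleph 1) A2) := by
  intro F hF
  have hkey : ∀ (G : Finset (Set ℕ)), ↑G ⊆ Lcard (Cardinal.aleph 1) A2 →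
      ∃ γ, γ < ω1 ∧ ∀ Y ∈ G, ∀ δ, γ ≤ δ → δ < ω1 →
        ((tw (δ + 1) \ tw δ) ∩ Yᶜ).Finite := by
    classical
    intro G
    induction G using Finset.induction_on with
    | empty => intro _; exact ⟨0, omega1_pos, by simp⟩
    | insert Y G hYG ih =>
      intro hsub
      have hsubG : ↑G ⊆ Lcard (Cardinal.aleph 1) A2 := by
        intro x hx
        apply hsub
        rw [Finset.coe_insert]
        exact Set.mem_insert_of_mem _ hx
      obtain ⟨γ1, hγ1, h1⟩ := ih hsubG
      obtain ⟨γ2, hγ2, h2⟩ := key_per_Y (Y := Y) (hsub (by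
        rw [Finset.coe_insert]
        exact Set.mem_insert _ _))
      refine ⟨max γ1 γ2, max_lt hγ1 hγ2, ?_⟩
      intro Z hZ δ hge hδ
      rcases Finset.mem_insert.mp hZ with rfl | hZG
      · exact h2 δ (le_trans (le_max_right _ _) hge) hδ
      · exact h1 Z hZG δ (le_trans (le_max_left _ _) hge) hδ
  obtain ⟨γ, hγ, hγp⟩ := hkey F hF
  have hW : (tw (γ + 1) \ tw γ).Infinite := tw_inf (lt_succ_self γ) (succ_lt_omega1 hγ)
  have hbad : (⋃ Y ∈ F, ((tw (γ + 1) \ tw γ) ∩ Yᶜ)).Finite :=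
    Set.Finite.biUnion F.finite_toSet (fun Y hY => hγp Y hY γ le_rfl hγ)
  obtain ⟨x, hxW, hxB⟩ := (hW.diff hbad).nonempty
  refine ⟨x, ?_⟩
  rw [Set.mem_sInter]
  intro Y hYF
  by_contra hxY
  exact hxB (Set.mem_biUnion hYF ⟨hxW, hxY⟩)

theorem notD : ¬ PrincipleDminus (Cardinal.aleph 1 : Cardinal.{0}) := by
  intro H
  obtain ⟨S, hS, hAdic⟩ := H A2 centeredA2
  obtain ⟨a, ha, b, hb, hab⟩ := cof_two hS
  have hfin : (tw a \ tw b).Finite := tw_fin hab (hS.1 hb)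
  obtain ⟨N, hN⟩ := hfin.bddAbove
  have hmem : ∀ i, spair a b (N + 1) 0 i ∈ S := by
    intro i
    rcases fin2cases i with rfl | rfl
    · exact ha
    · exact hb
  have h := hAdic [N + 1, 0] (spair a b (N + 1) 0) (spair_inj (ne_of_lt hab) (N + 1) 0) hmem
  rw [matInt_pair, spair_zero, spair_one] at h
  obtain ⟨x, hx1, hx2⟩ := h
  have hA1 : x ∈ tw a \ {m : ℕ | m < N + 1} := by
    have hh : A2 a (N + 1) = tw a \ {m : ℕ | m < N + 1} := by
      simp [A2]
    rwa [hh] at hx1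
  have hA2 : x ∈ (tw b)ᶜ := by
    have hh : A2 b 0 = (tw b)ᶜ := by
      simp [A2]
    rwa [hh] at hx2
  have hxab : x ∈ tw a \ tw b := ⟨hA1.1, hA2⟩
  exact hA1.2 (Nat.lt_succ_of_le (hN hxab))

end Stmt8

end Stmt8Aux

/-- Principle C*⁻(ω₁) is false, and principle D⁻(ω₁) is false. -/
theorem statement_8 :
    ¬ PrincipleCstarMinus (Cardinal.aleph 1 : Cardinal.{0}) ∧
      ¬ PrincipleDminus (Cardinal.aleph 1 : Cardinal.{0}) := by
  exact ⟨Stmt8.notC, Stmt8.notD⟩
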